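/- arXiv:1401.7253 — 2 statements merged into one kernel-verified Lean document; each statement's English description precedes it below -/
import Mathlib

section
/- (Condition (C7) for G^κ.) Let Θ be a nonempty measurable set of Lévy triplets with 𝒦 := sup_{(b,c,F)∈Θ} { ∫_{ℝ^d} |z|∧|z|² F(dz) + |b| + |c| } < ∞, and let G^κ, κ ∈ (0,1), be the associated approximating nonlinearities. Let (t,x,p,q) ∈ (0,∞)×ℝ^d×ℝ^d×S^d, let f be a bounded upper or lower semicontinuous function on (0,∞)×ℝ^d, and let f_n, g ∈ C^{1,2}_b((0,∞)×ℝ^d) be such that f_n(t,·) → f(t,·) locally uniformly on ℝ^d and (f_n)_{n∈ℕ} is uniformly bounded. Then, for all κ ∈ (0,1), G^κ(p, q, f_n(t,x+·), g(t,x+·)) → G^κ(p, q, f(t,x+·), g(t,x+·)). -/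
open MeasureTheory Filter Set
open scoped NNReal ENNReal Topology

noncomputable section

/-- Euclidean space `ℝ^d`. -/
abbrev Eu (d : ℕ) : Type := EuclideanSpace ℝ (Fin d)

/-- Matrices carry the product (= Borel) σ-algebra. -/
instance matrixMeasurableSpace {d : ℕ} : MeasurableSpace (Matrix (Fin d) (Fin d) ℝ) :=
  inferInstanceAs (MeasurableSpace (Fin d → Fin d → ℝ))

/-- The truncation function `h(z) = z 1_{|z| ≤ 1}`. -/
def trunc {d : ℕ} (z : Eu d) : Eu d := if ‖z‖ ≤ 1 then z else 0

/-- `F` is a Lévy measure on `ℝ^d`: `F({0}) = 0` and `∫ |z|² ∧ 1 F(dz) < ∞`. -/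
def IsLevyMeasure {d : ℕ} (F : Measure (Eu d)) : Prop :=
  F {0} = 0 ∧ (∫⁻ z, ENNReal.ofReal (min (‖z‖ ^ 2) 1) ∂F) < ⊤

/-- `Θ` is a set of Lévy triplets `(b, c, F)`: `c` is symmetric nonnegative definite and
`F` is a Lévy measure. -/
def IsLevyTripletSet {d : ℕ}
    (Θ : Set (Eu d × Matrix (Fin d) (Fin d) ℝ × Measure (Eu d))) : Prop :=
  ∀ x ∈ Θ, x.2.1.PosSemidef ∧ IsLevyMeasure x.2.2

/-- The condition `𝒦 = sup_{(b,c,F) ∈ Θ} { ∫ |z| ∧ |z|² F(dz) + |b| + |c| } < ∞`. -/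
def HasUniformBound {d : ℕ}
    (Θ : Set (Eu d × Matrix (Fin d) (Fin d) ℝ × Measure (Eu d))) : Prop :=
  ∃ K : ℝ≥0, ∀ x ∈ Θ,
    (∫⁻ z, ENNReal.ofReal (min ‖z‖ (‖z‖ ^ 2)) ∂x.2.2)
      + ENNReal.ofReal ‖x.1‖ + ∑ i, ∑ j, ENNReal.ofReal |x.2.1 i j| ≤ K

/-- The condition `𝒦_ε := sup_{F ∈ Θ₃} ∫_{|z| ≤ ε} |z|² F(dz) → 0` as `ε ↓ 0`. -/
def HasVanishingSmallJumps {d : ℕ}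
    (Θ : Set (Eu d × Matrix (Fin d) (Fin d) ℝ × Measure (Eu d))) : Prop :=
  Tendsto (fun ε : ℝ => ⨆ x ∈ Θ, ∫⁻ z in {z : Eu d | ‖z‖ ≤ ε},
      ((‖z‖₊ : ℝ≥0∞) ^ 2) ∂x.2.2)
    (nhdsWithin 0 (Set.Ioi 0)) (nhds 0)

/-- The nonlinearity
`G(p,q,f) = sup_{(b,c,F) ∈ Θ} { p·b + ½ tr[q c] + ∫ [f(z) - f(0) - D f(0)·h(z)] F(dz) }`. -/
def Gop {d : ℕ} (Θ : Set (Eu d × Matrix (Fin d) (Fin d) ℝ × Measure (Eu d)))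
    (p : Eu d) (q : Matrix (Fin d) (Fin d) ℝ) (f : Eu d → ℝ) : ℝ :=
  sSup {r : ℝ | ∃ x ∈ Θ,
    r = (∑ i, p i * x.1 i) + (1 / 2) * (q * x.2.1).trace
      + ∫ z, (f z - f 0 - fderiv ℝ f 0 (trunc z)) ∂x.2.2}

/-- The approximating nonlinearity `G^κ(p,q,f,g)`, where jumps of size `≤ κ` are handled
with the test function `g` and jumps of size `> κ` with `f`. -/
def Gkop {d : ℕ} (Θ : Set (Eu d × Matrix (Fin d) (Fin d) ℝ × Measure (Eu d)))
    (κ : ℝ) (p : Eu d) (q : Matrix (Fin d) (Fin d) ℝ) (f g : Eu d → ℝ) : ℝ :=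
  sSup {r : ℝ | ∃ x ∈ Θ,
    r = (∑ i, p i * x.1 i) + (1 / 2) * (q * x.2.1).trace
      + (∫ z in {z : Eu d | κ < ‖z‖}, (f z - f 0 - fderiv ℝ g 0 (trunc z)) ∂x.2.2)
      + (∫ z in {z : Eu d | ‖z‖ ≤ κ}, (g z - g 0 - fderiv ℝ g 0 (trunc z)) ∂x.2.2)}

/-- `f ∈ C^{1,2}((0,∞) × ℝ^d)`: jointly continuous, continuously differentiable in `t`
and twice continuously differentiable in `x` on `(0,∞) × ℝ^d`. -/
def IsC12 {d : ℕ} (f : ℝ → Eu d → ℝ) : Prop :=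
  ContinuousOn (fun pt : ℝ × Eu d => f pt.1 pt.2) (Set.Ioi 0 ×ˢ Set.univ) ∧
  (∀ x, ContDiffOn ℝ 1 (fun t => f t x) (Set.Ioi 0)) ∧
  (∀ t ∈ Set.Ioi (0 : ℝ), ContDiff ℝ 2 (f t)) ∧
  ContinuousOn (fun pt : ℝ × Eu d => fderiv ℝ (f pt.1) pt.2) (Set.Ioi 0 ×ˢ Set.univ) ∧
  ContinuousOn (fun pt : ℝ × Eu d => fderiv ℝ (fderiv ℝ (f pt.1)) pt.2)
    (Set.Ioi 0 ×ˢ Set.univ)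

/-- `f ∈ C_b^{1,2}((0,∞) × ℝ^d)`: `f ∈ C^{1,2}` with `f` and its derivatives bounded. -/
def IsC12b {d : ℕ} (f : ℝ → Eu d → ℝ) : Prop :=
  IsC12 f ∧
  ∃ C : ℝ, ∀ t ∈ Set.Ioi (0 : ℝ), ∀ x,
    |f t x| ≤ C ∧ |deriv (fun s => f s x) t| ≤ C ∧
    ‖fderiv ℝ (f t) x‖ ≤ C ∧ ‖fderiv ℝ (fderiv ℝ (f t)) x‖ ≤ C

/-- `f` is a bounded semicontinuous (upper or lower) function on `(0,∞) × ℝ^d`. -/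
def IsBoundedSC {d : ℕ} (f : ℝ → Eu d → ℝ) : Prop :=
  (UpperSemicontinuousOn (fun pt : ℝ × Eu d => f pt.1 pt.2) (Set.Ioi 0 ×ˢ Set.univ) ∨
    LowerSemicontinuousOn (fun pt : ℝ × Eu d => f pt.1 pt.2) (Set.Ioi 0 ×ˢ Set.univ)) ∧
  ∃ C : ℝ, ∀ t ∈ Set.Ioi (0 : ℝ), ∀ x, |f t x| ≤ C

/-! ### Auxiliary lemmas -/

lemma sSup_pairing {α : Type*} (Θ : Set α) (hne : Θ.Nonempty) (u w : α → ℝ)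
    (hu : BddAbove {r | ∃ x ∈ Θ, r = u x}) (hw : BddAbove {r | ∃ x ∈ Θ, r = w x})
    {ε : ℝ} (h : ∀ x ∈ Θ, |u x - w x| ≤ ε) :
    |sSup {r | ∃ x ∈ Θ, r = u x} - sSup {r | ∃ x ∈ Θ, r = w x}| ≤ ε := by
  obtain ⟨θ₀, hθ₀⟩ := hne
  have hune : {r | ∃ x ∈ Θ, r = u x}.Nonempty := ⟨u θ₀, θ₀, hθ₀, rfl⟩
  have hwne : {r | ∃ x ∈ Θ, r = w x}.Nonempty := ⟨w θ₀, θ₀, hθ₀, rfl⟩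
  rw [abs_sub_le_iff]
  constructor
  · rw [sub_le_iff_le_add]
    refine csSup_le hune ?_
    rintro r ⟨θ, hθ, rfl⟩
    have h1 : u θ ≤ w θ + ε := by have := h θ hθ; rw [abs_sub_le_iff] at this; linarith [this.1]
    have h2 : w θ ≤ sSup {r | ∃ x ∈ Θ, r = w x} := le_csSup hw ⟨θ, hθ, rfl⟩
    linarith
  · rw [sub_le_iff_le_add]
    refine csSup_le hwne ?_
    rintro r ⟨θ, hθ, rfl⟩
    have h1 : w θ ≤ u θ + ε := by have := h θ hθ; rw [abs_sub_le_iff] at this; linarith [this.2]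
    have h2 : u θ ≤ sSup {r | ∃ x ∈ Θ, r = u x} := le_csSup hu ⟨θ, hθ, rfl⟩
    linarith

lemma coord_le_norm {d : ℕ} (b : Eu d) (i : Fin d) : |b i| ≤ ‖b‖ := by
  rw [EuclideanSpace.norm_eq]
  rw [← Real.sqrt_sq_eq_abs]
  apply Real.sqrt_le_sqrt
  calc b i ^ 2 = ‖b i‖ ^ 2 := by rw [Real.norm_eq_abs, sq_abs]
    _ ≤ ∑ j, ‖b j‖ ^ 2 := Finset.single_le_sum (f := fun j => ‖b j‖ ^ 2)
        (fun j _ => sq_nonneg _) (Finset.mem_univ i)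

lemma usc_slice {d : ℕ} {f : ℝ → Eu d → ℝ} {t : ℝ} (ht : 0 < t) (x : Eu d)
    (h : UpperSemicontinuousOn (fun pt : ℝ × Eu d => f pt.1 pt.2) (Set.Ioi 0 ×ˢ Set.univ)) :
    UpperSemicontinuous (fun y : Eu d => f t (x + y)) := by
  intro y c hc
  have hmem : (t, x + y) ∈ (Set.Ioi 0 ×ˢ Set.univ : Set (ℝ × Eu d)) := ⟨ht, trivial⟩
  have h1 := h (t, x + y) hmem c hc
  have htend : Tendsto (fun y' : Eu d => (t, x + y'))
      (nhds y) (nhdsWithin (t, x + y) (Set.Ioi 0 ×ˢ Set.univ)) := by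
    apply tendsto_nhdsWithin_of_tendsto_nhds_of_eventually_within
    · exact (Continuous.tendsto (by continuity) y)
    · exact Filter.Eventually.of_forall fun y' => ⟨ht, trivial⟩
  exact htend.eventually h1

lemma lsc_slice {d : ℕ} {f : ℝ → Eu d → ℝ} {t : ℝ} (ht : 0 < t) (x : Eu d)
    (h : LowerSemicontinuousOn (fun pt : ℝ × Eu d => f pt.1 pt.2) (Set.Ioi 0 ×ˢ Set.univ)) :
    LowerSemicontinuous (fun y : Eu d => f t (x + y)) := by
  intro y c hc
  have hmem : (t, x + y) ∈ (Set.Ioi 0 ×ˢ Set.univ : Set (ℝ × Eu d)) := ⟨ht, trivial⟩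
  have h1 := h (t, x + y) hmem c hc
  have htend : Tendsto (fun y' : Eu d => (t, x + y'))
      (nhds y) (nhdsWithin (t, x + y) (Set.Ioi 0 ×ˢ Set.univ)) := by
    apply tendsto_nhdsWithin_of_tendsto_nhds_of_eventually_within
    · exact (Continuous.tendsto (by continuity) y)
    · exact Filter.Eventually.of_forall fun y' => ⟨ht, trivial⟩
  exact htend.eventually h1

lemma fderiv_shift {d : ℕ} (φ : Eu d → ℝ) (hφ : Differentiable ℝ φ) (x w : Eu d) :
    fderiv ℝ (fun z => φ (x + z)) w = fderiv ℝ φ (x + w) := by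
  have h1 : HasFDerivAt (fun z : Eu d => x + z) (ContinuousLinearMap.id ℝ (Eu d)) w :=
    (hasFDerivAt_id w).const_add x
  have h2 : HasFDerivAt (fun z => φ (x + z)) ((fderiv ℝ φ (x + w)).comp
      (ContinuousLinearMap.id ℝ (Eu d))) w := (hφ (x + w)).hasFDerivAt.comp w h1
  rw [ContinuousLinearMap.comp_id] at h2
  exact h2.fderiv

/-- Second-order Taylor bound. -/
lemma taylor_bound {d : ℕ} (φ : Eu d → ℝ) (hφ : ContDiff ℝ 2 φ) (Cg : ℝ)
    (hCg : ∀ y, ‖fderiv ℝ (fderiv ℝ φ) y‖ ≤ Cg) (a z : Eu d) :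
    |φ (a + z) - φ a - fderiv ℝ φ a z| ≤ Cg * ‖z‖ ^ 2 := by
  have hCg0 : 0 ≤ Cg := le_trans (ContinuousLinearMap.opNorm_nonneg _) (hCg 0)
  have hφ1 : Differentiable ℝ φ := hφ.differentiable two_ne_zero
  have hDφ : ContDiff ℝ 1 (fderiv ℝ φ) := hφ.fderiv_right (le_refl _)
  have hDφd : Differentiable ℝ (fderiv ℝ φ) := hDφ.differentiable one_ne_zero
  have lip : ∀ y y' : Eu d, ‖fderiv ℝ φ y - fderiv ℝ φ y'‖ ≤ Cg * ‖y - y'‖ := by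
    intro y y'
    exact convex_univ.norm_image_sub_le_of_norm_fderiv_le
      (fun w _ => hDφd w) (fun w _ => hCg w) trivial trivial
  set L := fderiv ℝ φ a with hL
  set u : Eu d → ℝ := fun w => φ (a + w) - φ a - L w with hu
  have hder : ∀ w : Eu d, HasFDerivAt u (fderiv ℝ φ (a + w) - L) w := by
    intro w
    have h1 : HasFDerivAt (fun z : Eu d => φ (a + z)) (fderiv ℝ φ (a + w)) w := by
      have := ((hφ1 (a + w)).hasFDerivAt.comp w ((hasFDerivAt_id w).const_add a))
      rwa [ContinuousLinearMap.comp_id] at this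
    exact (h1.sub_const (φ a)).sub L.hasFDerivAt
  have key : ‖u z - u 0‖ ≤ (Cg * ‖z‖) * ‖z - 0‖ := by
    refine (convex_closedBall (0 : Eu d) ‖z‖).norm_image_sub_le_of_norm_hasFDerivWithin_le
      (fun w _ => (hder w).hasFDerivWithinAt) (fun w hw => ?_)
      (Metric.mem_closedBall_self (norm_nonneg z)) ?_
    · calc ‖fderiv ℝ φ (a + w) - L‖ ≤ Cg * ‖(a + w) - a‖ := lip _ _
        _ = Cg * ‖w‖ := by rw [add_sub_cancel_left]
        _ ≤ Cg * ‖z‖ := by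
            have : ‖w‖ ≤ ‖z‖ := by simpa [Metric.mem_closedBall] using hw
            exact mul_le_mul_of_nonneg_left this hCg0
    · simp [Metric.mem_closedBall]
  have hu0 : u 0 = 0 := by simp [hu]
  have hfin : ‖u z‖ ≤ Cg * ‖z‖ ^ 2 := by
    rw [hu0, sub_zero, sub_zero] at key
    calc ‖u z‖ ≤ (Cg * ‖z‖) * ‖z‖ := key
      _ = Cg * ‖z‖ ^ 2 := by ring
  simpa [hu, Real.norm_eq_abs] using hfin

lemma trunc_norm_le_one {d : ℕ} (z : Eu d) : ‖trunc z‖ ≤ 1 := by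
  unfold trunc
  split_ifs with h
  · exact h
  · simp

lemma trunc_measurable {d : ℕ} : Measurable (trunc (d := d)) := by
  unfold trunc
  exact Measurable.ite ((isClosed_le continuous_norm continuous_const).measurableSet)
    measurable_id measurable_const

lemma integral_abs_le {α : Type*} [MeasurableSpace α] (μ : Measure α) (F : α → ℝ) {M : ℝ}
    (hM : 0 ≤ M) (h : (∫⁻ a, ENNReal.ofReal ‖F a‖ ∂μ) ≤ ENNReal.ofReal M) :
    |∫ a, F a ∂μ| ≤ M := by
  have h1 := norm_integral_le_lintegral_norm (μ := μ) F
  rw [Real.norm_eq_abs] at h1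
  exact le_trans h1 (ENNReal.toReal_le_of_le_ofReal hM h)

set_option maxHeartbeats 2000000 in
/-- **Statement 12** (Condition (C7) for `G^κ`): continuity of `G^κ` in its third argument
under locally uniform convergence of uniformly bounded test functions. -/
theorem Gk_condition_C7 {d : ℕ}
    (Θ : Set (Eu d × Matrix (Fin d) (Fin d) ℝ × Measure (Eu d)))
    (hne : Θ.Nonempty) (hmeas : MeasurableSet Θ) (htrip : IsLevyTripletSet Θ)
    (hK : HasUniformBound Θ)
    {t : ℝ} (ht : 0 < t) (x : Eu d) (p : Eu d)
    (q : Matrix (Fin d) (Fin d) ℝ) (hq : q.IsSymm)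
    (f : ℝ → Eu d → ℝ) (hf : IsBoundedSC f)
    (fn : ℕ → ℝ → Eu d → ℝ) (g : ℝ → Eu d → ℝ)
    (hfn : ∀ n, IsC12b (fn n)) (hg : IsC12b g)
    (hconv : TendstoLocallyUniformly (fun n y => fn n t y) (f t) atTop)
    (hub : ∃ C, ∀ n s y, |fn n s y| ≤ C) :
    ∀ κ ∈ Set.Ioo (0 : ℝ) 1,
      Tendsto (fun n => Gkop Θ κ p q (fun z => fn n t (x + z)) (fun z => g t (x + z)))
        atTop (nhds (Gkop Θ κ p q (fun z => f t (x + z)) (fun z => g t (x + z)))) := by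
  classical
  obtain ⟨K, hKb⟩ := hK
  obtain ⟨hsc, Cf, hCf⟩ := hf
  obtain ⟨Cn, hCn⟩ := hub
  obtain ⟨hgC12, Cg, hCgb⟩ := hg
  set Kr : ℝ := (K : ℝ) with hKrdef
  have hKr0 : (0:ℝ) ≤ Kr := K.coe_nonneg
  set Cb : ℝ := max Cf Cn with hCbdef
  have hCb0 : (0:ℝ) ≤ Cb := le_trans (abs_nonneg _) (le_max_of_le_left (hCf t ht 0))
  have hfb : ∀ y, |f t y| ≤ Cb := fun y => le_trans (hCf t ht y) (le_max_left _ _)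
  have hfnb : ∀ n y, |fn n t y| ≤ Cb := fun n y => le_trans (hCn n t y) (le_max_right _ _)
  have hgt : ContDiff ℝ 2 (g t) := hgC12.2.2.1 t ht
  have hCg0 : (0:ℝ) ≤ Cg := le_trans (ContinuousLinearMap.opNorm_nonneg _) ((hCgb t ht 0).2.2.2)
  intro κ hκmem
  obtain ⟨hκ0, hκ1⟩ := hκmem
  have hκ2 : (0:ℝ) < κ ^ 2 := by positivity
  have hSkm : MeasurableSet {z : Eu d | κ < ‖z‖} :=
    (isOpen_lt continuous_const continuous_norm).measurableSet
  have hminmeas : Measurable (fun z : Eu d => ENNReal.ofReal (min ‖z‖ (‖z‖ ^ 2))) :=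
    (measurable_norm.min (measurable_norm.pow_const 2)).ennreal_ofReal
  have hKint : ∀ θ ∈ Θ, (∫⁻ z, ENNReal.ofReal (min ‖z‖ (‖z‖ ^ 2)) ∂θ.2.2) ≤ (K : ℝ≥0∞) :=
    fun θ hθ => le_trans (le_add_right (le_add_right le_rfl)) (hKb θ hθ)
  have hFb : ∀ θ ∈ Θ, ∀ s : Set (Eu d), MeasurableSet s → ∀ m : ℝ, 0 < m →
      (∀ z ∈ s, m ≤ min ‖z‖ (‖z‖ ^ 2)) → θ.2.2 s ≤ (K : ℝ≥0∞) / ENNReal.ofReal m := by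
    intro θ hθ s hs m hm hsm
    rw [ENNReal.le_div_iff_mul_le (Or.inl (by simp [ENNReal.ofReal_eq_zero]; linarith))
      (Or.inl ENNReal.ofReal_ne_top)]
    calc θ.2.2 s * ENNReal.ofReal m = ENNReal.ofReal m * θ.2.2 s := mul_comm _ _
      _ = ∫⁻ _ in s, ENNReal.ofReal m ∂θ.2.2 := (setLIntegral_const s _).symm
      _ ≤ ∫⁻ z in s, ENNReal.ofReal (min ‖z‖ (‖z‖ ^ 2)) ∂θ.2.2 :=
          setLIntegral_mono hminmeas fun z hz => ENNReal.ofReal_le_ofReal (hsm z hz)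
      _ ≤ ∫⁻ z, ENNReal.ofReal (min ‖z‖ (‖z‖ ^ 2)) ∂θ.2.2 := setLIntegral_le_lintegral _ _
      _ ≤ (K : ℝ≥0∞) := hKint θ hθ
  have hFκ : ∀ θ ∈ Θ, θ.2.2 {z : Eu d | κ < ‖z‖} ≤ (K : ℝ≥0∞) / ENNReal.ofReal (κ ^ 2) := by
    intro θ hθ
    refine hFb θ hθ _ hSkm _ hκ2 ?_
    intro z hz
    simp only [mem_setOf_eq] at hz
    have h1 : κ ^ 2 ≤ ‖z‖ := le_trans (by nlinarith) hz.le
    have h2 : κ ^ 2 ≤ ‖z‖ ^ 2 := by nlinarith [norm_nonneg z]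
    exact le_min h1 h2
  have hFκfin : ∀ θ ∈ Θ, θ.2.2 {z : Eu d | κ < ‖z‖} < ⊤ :=
    fun θ hθ => lt_of_le_of_lt (hFκ θ hθ)
      (ENNReal.div_lt_top ENNReal.coe_ne_top (by simp [ENNReal.ofReal_eq_zero]; linarith))
  set L : Eu d →L[ℝ] ℝ := fderiv ℝ (fun z => g t (x + z)) 0 with hLdef
  have hmeasf : Measurable fun z : Eu d => f t (x + z) := by
    rcases hsc with h | h
    · exact (usc_slice ht x h).measurable
    · exact (lsc_slice ht x h).measurable
  have hmeasL : Measurable fun z : Eu d => L (trunc z) :=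
    L.continuous.measurable.comp trunc_measurable
  have hcontfn : ∀ n, Continuous fun z : Eu d => fn n t (x + z) := fun n =>
    (((hfn n).1.2.2.1 t ht).continuous).comp (continuous_const.add continuous_id)
  set A : Eu d → ℝ := fun z => f t (x + z) - f t (x + 0) - L (trunc z) with hAdef
  set An : ℕ → Eu d → ℝ := fun n z => fn n t (x + z) - fn n t (x + 0) - L (trunc z) with hAndef
  have hLb : ∀ z : Eu d, |L (trunc z)| ≤ ‖L‖ := by
    intro z
    calc |L (trunc z)| = ‖L (trunc z)‖ := (Real.norm_eq_abs _).symm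
      _ ≤ ‖L‖ * ‖trunc z‖ := L.le_opNorm _
      _ ≤ ‖L‖ * 1 := mul_le_mul_of_nonneg_left (trunc_norm_le_one z) (norm_nonneg _)
      _ = ‖L‖ := mul_one _
  have hAb : ∀ z, ‖A z‖ ≤ 2 * Cb + ‖L‖ := by
    intro z
    rw [Real.norm_eq_abs, hAdef]
    have e1 := abs_le.1 (hfb (x + z)); have e2 := abs_le.1 (hfb (x + 0))
    have e3 := abs_le.1 (hLb z)
    rw [abs_le]; constructor <;> simp only [] <;> [linarith; linarith]
  have hAnb : ∀ n z, ‖An n z‖ ≤ 2 * Cb + ‖L‖ := by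
    intro n z
    rw [Real.norm_eq_abs, hAndef]
    have e1 := abs_le.1 (hfnb n (x + z)); have e2 := abs_le.1 (hfnb n (x + 0))
    have e3 := abs_le.1 (hLb z)
    rw [abs_le]; constructor <;> simp only [] <;> [linarith; linarith]
  have hfinres : ∀ θ ∈ Θ, IsFiniteMeasure (θ.2.2.restrict {z : Eu d | κ < ‖z‖}) := by
    intro θ hθ
    constructor
    rw [Measure.restrict_apply_univ]
    exact hFκfin θ hθ
  have hIntA : ∀ θ ∈ Θ, Integrable A (θ.2.2.restrict {z : Eu d | κ < ‖z‖}) := by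
    intro θ hθ
    haveI := hfinres θ hθ
    refine Integrable.mono' (integrable_const (2 * Cb + ‖L‖)) ?_ (ae_of_all _ hAb)
    exact ((hmeasf.sub measurable_const).sub hmeasL).aestronglyMeasurable
  have hIntAn : ∀ n, ∀ θ ∈ Θ, Integrable (An n) (θ.2.2.restrict {z : Eu d | κ < ‖z‖}) := by
    intro n θ hθ
    haveI := hfinres θ hθ
    refine Integrable.mono' (integrable_const (2 * Cb + ‖L‖)) ?_ (ae_of_all _ (hAnb n))
    exact ((((hcontfn n).measurable).sub measurable_const).sub hmeasL).aestronglyMeasurable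
  -- Taylor bound for the g-part
  have hLx : L = fderiv ℝ (g t) x := by
    rw [hLdef, fderiv_shift (g t) (hgt.differentiable two_ne_zero) x 0, add_zero]
  have hBtay : ∀ z : Eu d, ‖z‖ ≤ κ →
      |g t (x + z) - g t (x + 0) - L (trunc z)| ≤ Cg * ‖z‖ ^ 2 := by
    intro z hz
    have htr : trunc z = z := if_pos (le_trans hz hκ1.le)
    rw [htr, hLx]
    have := taylor_bound (g t) hgt Cg (fun y => (hCgb t ht y).2.2.2) x z
    simpa [add_zero] using this
  have hBint : ∀ θ ∈ Θ,
      |∫ z in {z : Eu d | ‖z‖ ≤ κ}, (g t (x + z) - g t (x + 0) - L (trunc z)) ∂θ.2.2|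
        ≤ Cg * Kr := by
    intro θ hθ
    refine integral_abs_le _ _ (by positivity) ?_
    calc (∫⁻ z in {z : Eu d | ‖z‖ ≤ κ},
          ENNReal.ofReal ‖g t (x + z) - g t (x + 0) - L (trunc z)‖ ∂θ.2.2)
        ≤ ∫⁻ z in {z : Eu d | ‖z‖ ≤ κ},
            ENNReal.ofReal Cg * ENNReal.ofReal (min ‖z‖ (‖z‖ ^ 2)) ∂θ.2.2 := by
          refine setLIntegral_mono (measurable_const.mul hminmeas) ?_
          intro z hz
          simp only [mem_setOf_eq] at hz
          have h2 : min ‖z‖ (‖z‖ ^ 2) = ‖z‖ ^ 2 :=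
            min_eq_right (by nlinarith [norm_nonneg z])
          rw [← ENNReal.ofReal_mul hCg0, h2, Real.norm_eq_abs]
          exact ENNReal.ofReal_le_ofReal (hBtay z hz)
      _ = ENNReal.ofReal Cg
            * ∫⁻ z in {z : Eu d | ‖z‖ ≤ κ}, ENNReal.ofReal (min ‖z‖ (‖z‖ ^ 2)) ∂θ.2.2 :=
          lintegral_const_mul _ hminmeas
      _ ≤ ENNReal.ofReal Cg * (K : ℝ≥0∞) :=
          mul_le_mul_right (le_trans (setLIntegral_le_lintegral _ _) (hKint θ hθ)) _
      _ = ENNReal.ofReal (Cg * Kr) := by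
          rw [ENNReal.ofReal_mul hCg0, hKrdef, ENNReal.ofReal_coe_nnreal]
  have hKdivκ : (K : ℝ≥0∞) / ENNReal.ofReal (κ ^ 2) = ENNReal.ofReal (Kr / κ ^ 2) := by
    rw [ENNReal.ofReal_div_of_pos hκ2, hKrdef, ENNReal.ofReal_coe_nnreal]
  have hAint : ∀ F0 : Eu d → ℝ, (∀ z, ‖F0 z‖ ≤ 2 * Cb + ‖L‖) → ∀ θ ∈ Θ,
      |∫ z in {z : Eu d | κ < ‖z‖}, F0 z ∂θ.2.2| ≤ (2 * Cb + ‖L‖) * (Kr / κ ^ 2) := by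
    intro F0 hF0 θ hθ
    refine integral_abs_le _ _ (by positivity) ?_
    calc (∫⁻ z in {z : Eu d | κ < ‖z‖}, ENNReal.ofReal ‖F0 z‖ ∂θ.2.2)
        ≤ ∫⁻ _ in {z : Eu d | κ < ‖z‖}, ENNReal.ofReal (2 * Cb + ‖L‖) ∂θ.2.2 :=
          lintegral_mono fun z => ENNReal.ofReal_le_ofReal (hF0 z)
      _ = ENNReal.ofReal (2 * Cb + ‖L‖) * θ.2.2 {z : Eu d | κ < ‖z‖} := setLIntegral_const _ _
      _ ≤ ENNReal.ofReal (2 * Cb + ‖L‖) * ((K : ℝ≥0∞) / ENNReal.ofReal (κ ^ 2)) :=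
          mul_le_mul_right (hFκ θ hθ) _
      _ = ENNReal.ofReal ((2 * Cb + ‖L‖) * (Kr / κ ^ 2)) := by
          rw [hKdivκ, ← ENNReal.ofReal_mul (by positivity)]
  -- bound on the linear part
  have hbase : ∀ θ ∈ Θ, (∑ i, p i * θ.1 i) + (1 / 2) * (q * θ.2.1).trace ≤
      (∑ i, |p i|) * Kr + (1 / 2) * ((∑ i, ∑ j, |q i j|) * Kr) := by
    intro θ hθ
    have hbK : ‖θ.1‖ ≤ Kr := by
      have h1 : ENNReal.ofReal ‖θ.1‖ ≤ (K : ℝ≥0∞) :=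
        le_trans (le_add_right (le_add_left le_rfl)) (hKb θ hθ)
      rw [hKrdef, ← ENNReal.ofReal_coe_nnreal] at *
      exact (ENNReal.ofReal_le_ofReal_iff K.coe_nonneg).1 h1
    have hcK : ∀ i j, |θ.2.1 i j| ≤ Kr := by
      intro i j
      have h1 : ENNReal.ofReal |θ.2.1 i j| ≤ (K : ℝ≥0∞) := by
        refine le_trans (le_trans ?_ (le_add_left le_rfl)) (hKb θ hθ)
        refine le_trans (Finset.single_le_sum (f := fun j' => ENNReal.ofReal |θ.2.1 i j'|)
          (fun _ _ => zero_le) (Finset.mem_univ j)) ?_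
        exact Finset.single_le_sum (f := fun i' => ∑ j', ENNReal.ofReal |θ.2.1 i' j'|)
          (fun _ _ => zero_le) (Finset.mem_univ i)
      rw [hKrdef, ← ENNReal.ofReal_coe_nnreal] at *
      exact (ENNReal.ofReal_le_ofReal_iff K.coe_nonneg).1 h1
    have hb1 : (∑ i, p i * θ.1 i) ≤ (∑ i, |p i|) * Kr := by
      rw [Finset.sum_mul]
      refine Finset.sum_le_sum fun i _ => ?_
      calc p i * θ.1 i ≤ |p i * θ.1 i| := le_abs_self _
        _ = |p i| * |θ.1 i| := abs_mul _ _
        _ ≤ |p i| * Kr :=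
            mul_le_mul_of_nonneg_left (le_trans (coord_le_norm _ _) hbK) (abs_nonneg _)
    have hb2 : (q * θ.2.1).trace ≤ (∑ i, ∑ j, |q i j|) * Kr := by
      rw [Matrix.trace, Finset.sum_mul]
      refine Finset.sum_le_sum fun i _ => ?_
      rw [Matrix.diag_apply, Matrix.mul_apply, Finset.sum_mul]
      refine Finset.sum_le_sum fun j _ => ?_
      calc q i j * θ.2.1 j i ≤ |q i j * θ.2.1 j i| := le_abs_self _
        _ = |q i j| * |θ.2.1 j i| := abs_mul _ _
        _ ≤ |q i j| * Kr := mul_le_mul_of_nonneg_left (hcK j i) (abs_nonneg _)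
    have h3 := mul_le_mul_of_nonneg_left hb2 (by norm_num : (0:ℝ) ≤ 1 / 2)
    linarith
  set M : ℝ := (∑ i, |p i|) * Kr + (1 / 2) * ((∑ i, ∑ j, |q i j|) * Kr)
      + (2 * Cb + ‖L‖) * (Kr / κ ^ 2) + Cg * Kr with hMdef
  set u : ℕ → (Eu d × Matrix (Fin d) (Fin d) ℝ × Measure (Eu d)) → ℝ := fun n θ =>
    (∑ i, p i * θ.1 i) + (1 / 2) * (q * θ.2.1).trace
      + (∫ z in {z : Eu d | κ < ‖z‖}, An n z ∂θ.2.2)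
      + (∫ z in {z : Eu d | ‖z‖ ≤ κ}, (g t (x + z) - g t (x + 0) - L (trunc z)) ∂θ.2.2)
    with hudef
  set v : (Eu d × Matrix (Fin d) (Fin d) ℝ × Measure (Eu d)) → ℝ := fun θ =>
    (∑ i, p i * θ.1 i) + (1 / 2) * (q * θ.2.1).trace
      + (∫ z in {z : Eu d | κ < ‖z‖}, A z ∂θ.2.2)
      + (∫ z in {z : Eu d | ‖z‖ ≤ κ}, (g t (x + z) - g t (x + 0) - L (trunc z)) ∂θ.2.2)
    with hvdef
  have hGn : ∀ n, Gkop Θ κ p q (fun z => fn n t (x + z)) (fun z => g t (x + z))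
      = sSup {r | ∃ θ ∈ Θ, r = u n θ} := fun n => rfl
  have hGv : Gkop Θ κ p q (fun z => f t (x + z)) (fun z => g t (x + z))
      = sSup {r | ∃ θ ∈ Θ, r = v θ} := rfl
  have hbddn : ∀ n, BddAbove {r | ∃ θ ∈ Θ, r = u n θ} := by
    intro n
    refine ⟨M, ?_⟩
    rintro r ⟨θ, hθ, rfl⟩
    have h1 := hbase θ hθ
    have h2 := abs_le.1 (hAint (An n) (hAnb n) θ hθ)
    have h3 := abs_le.1 (hBint θ hθ)
    rw [hudef, hMdef]; simp only []; linarith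
  have hbdd : BddAbove {r | ∃ θ ∈ Θ, r = v θ} := by
    refine ⟨M, ?_⟩
    rintro r ⟨θ, hθ, rfl⟩
    have h1 := hbase θ hθ
    have h2 := abs_le.1 (hAint A hAb θ hθ)
    have h3 := abs_le.1 (hBint θ hθ)
    rw [hvdef, hMdef]; simp only []; linarith
  -- the limit
  rw [Metric.tendsto_atTop]
  intro ε hε
  set ε' : ℝ := ε * κ ^ 2 / (16 * (Kr + 1)) with hε'def
  have hε'0 : 0 < ε' := by positivity
  set R : ℝ := 1 + 16 * (Cb + 1) * (Kr + 1) / ε with hRdef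
  have hR1 : (1:ℝ) ≤ R := le_add_of_nonneg_right (by positivity)
  have hR0 : (0:ℝ) < R := lt_of_lt_of_le one_pos hR1
  have hRm : MeasurableSet {z : Eu d | R < ‖z‖} :=
    (isOpen_lt continuous_const continuous_norm).measurableSet
  have hFR : ∀ θ ∈ Θ, θ.2.2 {z : Eu d | R < ‖z‖} ≤ (K : ℝ≥0∞) / ENNReal.ofReal R := by
    intro θ hθ
    refine hFb θ hθ _ hRm _ hR0 ?_
    intro z hz
    simp only [mem_setOf_eq] at hz
    exact le_min hz.le (by nlinarith)
  have hKdivR : (K : ℝ≥0∞) / ENNReal.ofReal R = ENNReal.ofReal (Kr / R) := by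
    rw [ENNReal.ofReal_div_of_pos hR0, hKrdef, ENNReal.ofReal_coe_nnreal]
  have hloc : TendstoLocallyUniformlyOn (fun n y => fn n t y) (f t) atTop
      (Metric.closedBall x R) :=
    (tendstoLocallyUniformlyOn_univ.2 hconv).mono (subset_univ _)
  have hunif := (tendstoLocallyUniformlyOn_iff_tendstoUniformlyOn_of_compact
    (isCompact_closedBall x R)).1 hloc
  have hev : ∀ᶠ n in atTop, ∀ y ∈ Metric.closedBall x R, dist (f t y) (fn n t y) < ε' :=
    Metric.tendstoUniformlyOn_iff.1 hunif ε' hε'0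
  obtain ⟨N, hN⟩ := eventually_atTop.1 hev
  refine ⟨N, fun n hn => ?_⟩
  rw [Real.dist_eq, hGn n, hGv]
  have hkey : |sSup {r | ∃ θ ∈ Θ, r = u n θ} - sSup {r | ∃ θ ∈ Θ, r = v θ}| ≤ ε / 2 := by
    refine sSup_pairing Θ hne (u n) v (hbddn n) hbdd ?_
    intro θ hθ
    have hdiff : u n θ - v θ = ∫ z in {z : Eu d | κ < ‖z‖}, (An n z - A z) ∂θ.2.2 := by
      rw [integral_sub (hIntAn n θ hθ) (hIntA θ hθ), hudef, hvdef]
      simp only []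
      ring
    rw [hdiff]
    -- pointwise bound
    have hpt : ∀ z : Eu d, ENNReal.ofReal ‖An n z - A z‖ ≤ ENNReal.ofReal (2 * ε')
        + ({z : Eu d | R < ‖z‖}).indicator (fun _ => ENNReal.ofReal (4 * Cb)) z := by
      intro z
      by_cases hzR : R < ‖z‖
      · have h1 : ‖An n z - A z‖ ≤ 4 * Cb := by
          rw [Real.norm_eq_abs, hAndef, hAdef]
          have e1 := abs_le.1 (hfnb n (x + z)); have e2 := abs_le.1 (hfb (x + z))
          have e3 := abs_le.1 (hfnb n (x + 0)); have e4 := abs_le.1 (hfb (x + 0))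
          rw [abs_le]; constructor <;> simp only [] <;> [linarith; linarith]
        calc ENNReal.ofReal ‖An n z - A z‖ ≤ ENNReal.ofReal (4 * Cb) :=
            ENNReal.ofReal_le_ofReal h1
          _ ≤ _ := by rw [Set.indicator_of_mem (show z ∈ {z : Eu d | R < ‖z‖} from hzR)]; exact le_add_self
      · have hz1 : x + z ∈ Metric.closedBall x R := by
          rw [Metric.mem_closedBall, dist_eq_norm, add_sub_cancel_left]
          exact le_of_not_gt hzR
        have hz0 : x + 0 ∈ Metric.closedBall x R := by
          rw [Metric.mem_closedBall, dist_eq_norm]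
          simp only [add_zero, sub_self, norm_zero]
          linarith
        have e1 := abs_le.1 (Real.dist_eq _ _ ▸ hN n hn (x + z) hz1).le
        have e2 := abs_le.1 (Real.dist_eq _ _ ▸ hN n hn (x + 0) hz0).le
        have h1 : ‖An n z - A z‖ ≤ 2 * ε' := by
          rw [Real.norm_eq_abs, hAndef, hAdef]
          rw [abs_le]; constructor <;> simp only [] <;> [linarith; linarith]
        calc ENNReal.ofReal ‖An n z - A z‖ ≤ ENNReal.ofReal (2 * ε') :=
            ENNReal.ofReal_le_ofReal h1
          _ ≤ _ := le_self_add
    refine integral_abs_le _ _ (by positivity) ?_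
    calc (∫⁻ z in {z : Eu d | κ < ‖z‖}, ENNReal.ofReal ‖An n z - A z‖ ∂θ.2.2)
        ≤ ∫⁻ z in {z : Eu d | κ < ‖z‖}, (ENNReal.ofReal (2 * ε')
          + ({z : Eu d | R < ‖z‖}).indicator (fun _ => ENNReal.ofReal (4 * Cb)) z) ∂θ.2.2 :=
          lintegral_mono hpt
      _ = ENNReal.ofReal (2 * ε') * θ.2.2 {z : Eu d | κ < ‖z‖}
          + ENNReal.ofReal (4 * Cb)
            * (θ.2.2.restrict {z : Eu d | κ < ‖z‖}) {z : Eu d | R < ‖z‖} := by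
          rw [lintegral_add_left measurable_const, lintegral_indicator hRm,
            setLIntegral_const, lintegral_const, Measure.restrict_apply_univ]
      _ ≤ ENNReal.ofReal (2 * ε') * ((K : ℝ≥0∞) / ENNReal.ofReal (κ ^ 2))
          + ENNReal.ofReal (4 * Cb) * ((K : ℝ≥0∞) / ENNReal.ofReal R) := by
          refine add_le_add (mul_le_mul_right (hFκ θ hθ) _) (mul_le_mul_right ?_ _)
          rw [Measure.restrict_apply hRm]
          exact le_trans (measure_mono inter_subset_left) (hFR θ hθ)
      _ = ENNReal.ofReal (2 * ε' * (Kr / κ ^ 2) + 4 * Cb * (Kr / R)) := by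
          rw [hKdivκ, hKdivR, ← ENNReal.ofReal_mul (by positivity),
            ← ENNReal.ofReal_mul (by positivity),
            ← ENNReal.ofReal_add (by positivity) (by positivity)]
      _ ≤ ENNReal.ofReal (ε / 2) := by
          refine ENNReal.ofReal_le_ofReal ?_
          have ht1 : 2 * ε' * (Kr / κ ^ 2) ≤ ε / 8 := by
            have heq : 2 * ε' * (Kr / κ ^ 2) = ε * (Kr / (Kr + 1)) / 8 := by
              rw [hε'def]; field_simp; ring
            rw [heq]
            have hfr : Kr / (Kr + 1) ≤ 1 := by
              rw [div_le_one (by linarith)]; linarith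
            nlinarith [hε.le, mul_le_mul_of_nonneg_left hfr hε.le]
          have ht2 : 4 * Cb * (Kr / R) ≤ ε / 4 := by
            have h0 : 4 * Cb * (Kr / R) = 4 * Cb * Kr / R := by ring
            rw [h0, div_le_iff₀ hR0, hRdef]
            have expand : ε / 4 * (1 + 16 * (Cb + 1) * (Kr + 1) / ε)
                = ε / 4 + 4 * (Cb + 1) * (Kr + 1) := by
              field_simp; ring
            rw [expand]
            nlinarith [hCb0, hKr0, hε.le]
          linarith
  calc |sSup {r | ∃ θ ∈ Θ, r = u n θ} - sSup {r | ∃ θ ∈ Θ, r = v θ}| ≤ ε / 2 := hkey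
    _ < ε := by linarith
end
end

section
/- (Condition (C8) for G^κ.) Let Θ be a nonempty measurable set of Lévy triplets with 𝒦 := sup_{(b,c,F)∈Θ} { ∫_{ℝ^d} |z|∧|z|² F(dz) + |b| + |c| } < ∞, and let G^κ, κ ∈ (0,1), be the associated approximating nonlinearities. Then there exists a constant C > 0 (depending only on 𝒦) such that |G^κ(p_1, q_1, f(t,·)+ψ(·), g(t,·)+ψ(·)) − G^κ(p_2, q_2, f(t,·), g(t,·))| ≤ C ( |p_1 − p_2| + |q_1 − q_2| + ‖D_x ψ‖_∞ + ‖D²_{xx} ψ‖_∞ ) for all κ ∈ (0,1), t ∈ (0,∞), p_1, p_2 ∈ ℝ^d, q_1, q_2 ∈ S^d, all bounded upper or lower semicontinuous f on (0,∞)×ℝ^d, all g ∈ C^{1,2}((0,∞)×ℝ^d) and all ψ ∈ C²_b(ℝ^d). -/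
open MeasureTheory Filter Set
open scoped NNReal ENNReal Topology

noncomputable section

/-- `ψ ∈ C²_b(ℝ^d)`: twice continuously differentiable with `ψ` and its first two
derivatives bounded. -/
def IsC2b {d : ℕ} (ψ : Eu d → ℝ) : Prop :=
  ContDiff ℝ 2 ψ ∧ ∃ C : ℝ, ∀ y, |ψ y| ≤ C ∧ ‖fderiv ℝ ψ y‖ ≤ C ∧
    ‖fderiv ℝ (fderiv ℝ ψ) y‖ ≤ C
section AuxLemmas
variable {d : ℕ}

lemma measurable_trunc : Measurable (trunc (d := d)) := by
  unfold trunc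
  exact Measurable.ite (measurableSet_le measurable_norm measurable_const)
    measurable_id measurable_const

lemma norm_trunc_le (z : Eu d) : ‖trunc z‖ ≤ 1 := by
  unfold trunc; split
  · assumption
  · simp

lemma trunc_eq_self {z : Eu d} (h : ‖z‖ ≤ 1) : trunc z = z := if_pos h
lemma trunc_eq_zero {z : Eu d} (h : 1 < ‖z‖) : trunc z = 0 := if_neg (not_le.2 h)

/-- The function `z ↦ min ‖z‖ ‖z‖²`. -/
abbrev mfun (z : Eu d) : ℝ := min ‖z‖ (‖z‖ ^ 2)

lemma mfun_nonneg (z : Eu d) : 0 ≤ mfun z := le_min (norm_nonneg z) (by positivity)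

lemma measurable_mfun : Measurable (mfun (d := d)) :=
  measurable_norm.min (measurable_norm.pow_const 2)

lemma mfun_eq_sq {z : Eu d} (h : ‖z‖ ≤ 1) : mfun z = ‖z‖ ^ 2 := by
  have : ‖z‖ ^ 2 ≤ ‖z‖ := by nlinarith [norm_nonneg z]
  simp [mfun, min_eq_right this]

lemma mfun_eq_norm {z : Eu d} (h : 1 ≤ ‖z‖) : mfun z = ‖z‖ := by
  have : ‖z‖ ≤ ‖z‖ ^ 2 := by nlinarith
  simp [mfun, min_eq_left this]

lemma abs_sub_le_of_fderiv_bound {ψ : Eu d → ℝ} (hψ : Differentiable ℝ ψ) {C : ℝ}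
    (hC : ∀ y, ‖fderiv ℝ ψ y‖ ≤ C) (z : Eu d) : |ψ z - ψ 0| ≤ C * ‖z‖ := by
  have := Convex.norm_image_sub_le_of_norm_fderiv_le (fun y _ => (hψ y))
    (fun y _ => hC y) convex_univ (Set.mem_univ (0 : Eu d)) (Set.mem_univ z)
  simpa [Real.norm_eq_abs] using this

lemma taylor_quad {ψ : Eu d → ℝ} (hψ : ContDiff ℝ 2 ψ) {C : ℝ}
    (hC : ∀ y ∈ Metric.closedBall (0 : Eu d) 1, ‖fderiv ℝ (fderiv ℝ ψ) y‖ ≤ C)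
    {z : Eu d} (hz : ‖z‖ ≤ 1) :
    |ψ z - ψ 0 - fderiv ℝ ψ 0 z| ≤ C * ‖z‖ ^ 2 := by
  have hd1 : ContDiff ℝ 1 (fderiv ℝ ψ) := hψ.fderiv_right (by norm_num)
  have hC0 : 0 ≤ C := (norm_nonneg (fderiv ℝ (fderiv ℝ ψ) 0)).trans (hC 0 (Metric.mem_closedBall_self zero_le_one))
  have hsub : Metric.closedBall (0 : Eu d) ‖z‖ ⊆ Metric.closedBall (0 : Eu d) 1 :=
    Metric.closedBall_subset_closedBall hz
  have h1 : ∀ y ∈ Metric.closedBall (0 : Eu d) ‖z‖,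
      ‖fderiv ℝ ψ y - fderiv ℝ ψ 0‖ ≤ C * ‖z‖ := by
    intro y hy
    have := Convex.norm_image_sub_le_of_norm_fderiv_le (f := fderiv ℝ ψ)
      (fun x _ => (hd1.differentiable (by norm_num)) x)
      (fun x hx => hC x (hsub hx)) (convex_closedBall _ _)
      (Metric.mem_closedBall_self (norm_nonneg z)) hy
    have hy' : ‖y - 0‖ ≤ ‖z‖ := by simpa [Metric.mem_closedBall, dist_eq_norm] using hy
    calc ‖fderiv ℝ ψ y - fderiv ℝ ψ 0‖ ≤ C * ‖y - 0‖ := this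
      _ ≤ C * ‖z‖ := mul_le_mul_of_nonneg_left hy' hC0
  set L := fderiv ℝ ψ 0 with hLdef
  have hψd : Differentiable ℝ ψ := hψ.differentiable (by norm_num)
  have hdu : ∀ y, fderiv ℝ (fun y => ψ y - L y) y = fderiv ℝ ψ y - L := by
    intro y
    rw [fderiv_fun_sub (hψd y) L.differentiableAt, L.fderiv]
  have hzmem : z ∈ Metric.closedBall (0 : Eu d) ‖z‖ := by
    simp [Metric.mem_closedBall, dist_eq_norm]
  have key := Convex.norm_image_sub_le_of_norm_fderiv_le (f := fun y => ψ y - L y)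
    (fun x _ => (hψd x).sub L.differentiableAt)
    (fun x hx => by rw [hdu]; exact h1 x hx) (convex_closedBall _ _)
    (Metric.mem_closedBall_self (norm_nonneg z)) hzmem
  have key' : |ψ z - L z - (ψ 0 - L 0)| ≤ C * ‖z‖ * ‖z - 0‖ := by
    simpa [Real.norm_eq_abs] using key
  have heq : ψ z - L z - (ψ 0 - L 0) = ψ z - ψ 0 - L z := by
    rw [map_zero]; ring
  rw [heq, sub_zero] at key'
  calc |ψ z - ψ 0 - L z| ≤ C * ‖z‖ * ‖z‖ := key'
    _ = C * ‖z‖ ^ 2 := by ring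

lemma psi_integrand_bound {ψ : Eu d → ℝ} (hψ : ContDiff ℝ 2 ψ) {C₁ C₂ : ℝ}
    (h1 : ∀ y, ‖fderiv ℝ ψ y‖ ≤ C₁) (h2 : ∀ y, ‖fderiv ℝ (fderiv ℝ ψ) y‖ ≤ C₂) (z : Eu d) :
    |ψ z - ψ 0 - fderiv ℝ ψ 0 (trunc z)| ≤ (C₁ + C₂) * mfun z := by
  have hC₁ : 0 ≤ C₁ := (norm_nonneg _).trans (h1 0)
  have hC₂ : 0 ≤ C₂ := (norm_nonneg (fderiv ℝ (fderiv ℝ ψ) 0)).trans (h2 0)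
  rcases le_or_gt ‖z‖ 1 with h | h
  · rw [trunc_eq_self h, mfun_eq_sq h]
    have := taylor_quad hψ (fun y _ => h2 y) h
    nlinarith [sq_nonneg ‖z‖]
  · rw [trunc_eq_zero h, mfun_eq_norm h.le, map_zero, sub_zero]
    have := abs_sub_le_of_fderiv_bound (hψ.differentiable (by norm_num)) h1 z
    nlinarith [norm_nonneg z]

end AuxLemmas
section AuxLemmas2
variable {d : ℕ}

lemma integrable_and_bound {F : Measure (Eu d)} {K : ℝ} (hK0 : 0 ≤ K)
    {s : Set (Eu d)} (hs : MeasurableSet s)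
    (hF : ∫⁻ z in s, ENNReal.ofReal (mfun z) ∂F ≤ ENNReal.ofReal K)
    {u : Eu d → ℝ} {M : ℝ} (hM : 0 ≤ M)
    (hu : AEStronglyMeasurable u (F.restrict s))
    (hb : ∀ z ∈ s, |u z| ≤ M * mfun z) :
    IntegrableOn u s F ∧ |∫ z in s, u z ∂F| ≤ M * K := by
  have key : ∫⁻ z in s, ENNReal.ofReal ‖u z‖ ∂F ≤ ENNReal.ofReal M * ENNReal.ofReal K := by
    calc ∫⁻ z in s, ENNReal.ofReal ‖u z‖ ∂F
        ≤ ∫⁻ z in s, ENNReal.ofReal M * ENNReal.ofReal (mfun z) ∂F := by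
          refine setLIntegral_mono (measurable_mfun.ennreal_ofReal.const_mul _) fun z hz => ?_
          rw [← ENNReal.ofReal_mul hM]
          exact ENNReal.ofReal_le_ofReal (by rw [Real.norm_eq_abs]; exact hb z hz)
      _ = ENNReal.ofReal M * ∫⁻ z in s, ENNReal.ofReal (mfun z) ∂F :=
          lintegral_const_mul' _ _ ENNReal.ofReal_ne_top
      _ ≤ ENNReal.ofReal M * ENNReal.ofReal K := mul_le_mul_right hF _
  have hint : IntegrableOn u s F := by
    refine ⟨hu, ?_⟩
    rw [hasFiniteIntegral_iff_norm]
    exact lt_of_le_of_lt key (by finiteness)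
  refine ⟨hint, ?_⟩
  have h2 := norm_integral_le_lintegral_norm (μ := F.restrict s) u
  rw [Real.norm_eq_abs] at h2
  refine h2.trans ?_
  calc (∫⁻ z in s, ENNReal.ofReal ‖u z‖ ∂F).toReal
      ≤ (ENNReal.ofReal M * ENNReal.ofReal K).toReal :=
        ENNReal.toReal_mono (by finiteness) key
    _ = M * K := by rw [← ENNReal.ofReal_mul hM, ENNReal.toReal_ofReal (by positivity)]

lemma integrable_and_bound_const {F : Measure (Eu d)} {s : Set (Eu d)}
    (hfin : F s ≠ ⊤) {u : Eu d → ℝ} {M : ℝ} (hM : 0 ≤ M)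
    (hu : AEStronglyMeasurable u (F.restrict s))
    (hb : ∀ z ∈ s, |u z| ≤ M) :
    IntegrableOn u s F ∧ |∫ z in s, u z ∂F| ≤ M * (F s).toReal := by
  have key : ∫⁻ z in s, ENNReal.ofReal ‖u z‖ ∂F ≤ ENNReal.ofReal M * F s := by
    calc ∫⁻ z in s, ENNReal.ofReal ‖u z‖ ∂F
        ≤ ∫⁻ _ in s, ENNReal.ofReal M ∂F := by
          refine setLIntegral_mono measurable_const fun z hz => ?_
          exact ENNReal.ofReal_le_ofReal (by rw [Real.norm_eq_abs]; exact hb z hz)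
      _ = ENNReal.ofReal M * F s := setLIntegral_const s _
  have hint : IntegrableOn u s F := by
    refine ⟨hu, ?_⟩
    rw [hasFiniteIntegral_iff_norm]
    exact lt_of_le_of_lt key (ENNReal.mul_lt_top ENNReal.ofReal_lt_top hfin.lt_top)
  refine ⟨hint, ?_⟩
  have h2 := norm_integral_le_lintegral_norm (μ := F.restrict s) u
  rw [Real.norm_eq_abs] at h2
  refine h2.trans ?_
  calc (∫⁻ z in s, ENNReal.ofReal ‖u z‖ ∂F).toReal
      ≤ (ENNReal.ofReal M * F s).toReal := ENNReal.toReal_mono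
        (ENNReal.mul_ne_top ENNReal.ofReal_ne_top hfin) key
    _ = M * (F s).toReal := by rw [ENNReal.toReal_mul, ENNReal.toReal_ofReal hM]

lemma abs_csSup_sub_csSup_le {S₁ S₂ : Set ℝ} {M : ℝ} (h₁ : S₁.Nonempty) (h₂ : S₂.Nonempty)
    (b₁ : BddAbove S₁) (b₂ : BddAbove S₂)
    (h12 : ∀ r ∈ S₁, ∃ s ∈ S₂, |r - s| ≤ M)
    (h21 : ∀ s ∈ S₂, ∃ r ∈ S₁, |s - r| ≤ M) :
    |sSup S₁ - sSup S₂| ≤ M := by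
  rw [abs_sub_le_iff]
  constructor
  · rw [sub_le_iff_le_add]
    refine csSup_le h₁ fun r hr => ?_
    obtain ⟨s, hs, hrs⟩ := h12 r hr
    have h1 : r - s ≤ M := (le_abs_self _).trans hrs
    have h2 : s ≤ sSup S₂ := le_csSup b₂ hs
    linarith
  · rw [sub_le_iff_le_add]
    refine csSup_le h₂ fun s hsm => ?_
    obtain ⟨r, hr, hrs⟩ := h21 s hsm
    have h1 : s - r ≤ M := (le_abs_self _).trans hrs
    have h2 : r ≤ sSup S₁ := le_csSup b₁ hr
    linarith

lemma IsBoundedSC.slice_measurable {f : ℝ → Eu d → ℝ} (hf : IsBoundedSC f) {t : ℝ}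
    (ht : t ∈ Set.Ioi (0 : ℝ)) : Measurable (f t) := by
  have htend : ∀ z : Eu d, Tendsto (fun z' : Eu d => (t, z')) (𝓝 z)
      (𝓝[Set.Ioi (0:ℝ) ×ˢ (Set.univ : Set (Eu d))] (t, z)) := by
    intro z
    refine tendsto_nhdsWithin_of_tendsto_nhds_of_eventually_within _ ?_ ?_
    · exact (Continuous.tendsto (by continuity) z)
    · exact Eventually.of_forall fun z' => ⟨ht, Set.mem_univ _⟩
  rcases hf.1 with h | h
  · refine UpperSemicontinuous.measurable fun z y hy => ?_
    exact (htend z).eventually (h (t, z) ⟨ht, Set.mem_univ z⟩ y hy)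
  · refine LowerSemicontinuous.measurable fun z y hy => ?_
    exact (htend z).eventually (h (t, z) ⟨ht, Set.mem_univ z⟩ y hy)

lemma inner_sum_bound (p b : Eu d) {Kr : ℝ} (hb : ‖b‖ ≤ Kr) :
    |∑ i, p i * b i| ≤ ‖p‖ * Kr := by
  have h1 : (∑ i, p i * b i) = inner ℝ p b := by
    rw [PiLp.inner_apply]
    simp [RCLike.inner_apply, mul_comm]
  rw [h1]
  calc |(inner ℝ p b : ℝ)| ≤ ‖p‖ * ‖b‖ := abs_real_inner_le_norm p b
    _ ≤ ‖p‖ * Kr := mul_le_mul_of_nonneg_left hb (norm_nonneg p)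

lemma trace_bound (q c : Matrix (Fin d) (Fin d) ℝ) {Kr : ℝ}
    (hc : ∀ i j, |c i j| ≤ Kr) :
    |(q * c).trace| ≤ (∑ i, ∑ j, |q i j|) * Kr := by
  have h1 : (q * c).trace = ∑ i, ∑ j, q i j * c j i := by
    simp [Matrix.trace, Matrix.diag, Matrix.mul_apply]
  rw [h1, Finset.sum_mul]
  refine (Finset.abs_sum_le_sum_abs _ _).trans (Finset.sum_le_sum fun i _ => ?_)
  rw [Finset.sum_mul]
  refine (Finset.abs_sum_le_sum_abs _ _).trans (Finset.sum_le_sum fun j _ => ?_)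
  rw [abs_mul]
  exact mul_le_mul_of_nonneg_left (hc j i) (abs_nonneg _)

end AuxLemmas2
section AuxLemmas3
variable {d : ℕ}

lemma triplet_bounds {Θ : Set (Eu d × Matrix (Fin d) (Fin d) ℝ × Measure (Eu d))} {K : ℝ≥0}
    (hK : ∀ x ∈ Θ, (∫⁻ z, ENNReal.ofReal (min ‖z‖ (‖z‖ ^ 2)) ∂x.2.2)
      + ENNReal.ofReal ‖x.1‖ + ∑ i, ∑ j, ENNReal.ofReal |x.2.1 i j| ≤ K)
    {x : Eu d × Matrix (Fin d) (Fin d) ℝ × Measure (Eu d)} (hx : x ∈ Θ) :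
    ‖x.1‖ ≤ (K : ℝ) ∧ (∀ i j, |x.2.1 i j| ≤ (K : ℝ)) ∧
      (∫⁻ z, ENNReal.ofReal (mfun z) ∂x.2.2) ≤ ENNReal.ofReal (K : ℝ) := by
  have h := hK x hx
  rw [show ((K : ℝ≥0∞)) = ENNReal.ofReal (K : ℝ) from (ENNReal.ofReal_coe_nnreal).symm] at h
  refine ⟨?_, ?_, ?_⟩
  · have hB : ENNReal.ofReal ‖x.1‖ ≤ ENNReal.ofReal (K : ℝ) :=
      le_trans (le_trans le_add_self le_self_add) h
    exact (ENNReal.ofReal_le_ofReal_iff K.coe_nonneg).1 hB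
  · intro i j
    have h1 : ENNReal.ofReal |x.2.1 i j| ≤ ∑ j', ENNReal.ofReal |x.2.1 i j'| :=
      Finset.single_le_sum (f := fun j' => ENNReal.ofReal |x.2.1 i j'|)
        (fun _ _ => zero_le) (Finset.mem_univ j)
    have h2 : (∑ j', ENNReal.ofReal |x.2.1 i j'|)
        ≤ ∑ i', ∑ j', ENNReal.ofReal |x.2.1 i' j'| :=
      Finset.single_le_sum (f := fun i' => ∑ j', ENNReal.ofReal |x.2.1 i' j'|)
        (fun _ _ => zero_le) (Finset.mem_univ i)
    have h3 : ENNReal.ofReal |x.2.1 i j| ≤ ENNReal.ofReal (K : ℝ) :=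
      le_trans (le_trans h1 h2) (le_trans le_add_self h)
    exact (ENNReal.ofReal_le_ofReal_iff K.coe_nonneg).1 h3
  · exact le_trans (le_trans le_self_add le_self_add) h

lemma Fmass_ball_compl {F : Measure (Eu d)} {Kr : ℝ} (hKr : 0 ≤ Kr)
    (hF : ∫⁻ z, ENNReal.ofReal (mfun z) ∂F ≤ ENNReal.ofReal Kr)
    {κ : ℝ} (hκ : κ ∈ Set.Ioo (0:ℝ) 1) :
    F {z : Eu d | κ < ‖z‖} ≠ ⊤ ∧ (F {z : Eu d | κ < ‖z‖}).toReal ≤ Kr / κ ^ 2 := by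
  set s := {z : Eu d | κ < ‖z‖} with hs
  have hlow : ∀ z ∈ s, ENNReal.ofReal (κ^2) ≤ ENNReal.ofReal (mfun z) := by
    intro z hz
    simp only [hs, Set.mem_setOf_eq] at hz
    refine ENNReal.ofReal_le_ofReal (le_min ?_ ?_)
    · nlinarith [hκ.1, hκ.2]
    · nlinarith [hκ.1]
  have h1 : ENNReal.ofReal (κ^2) * F s ≤ ENNReal.ofReal Kr := by
    rw [← setLIntegral_const]
    exact le_trans (setLIntegral_mono measurable_mfun.ennreal_ofReal hlow)
      (le_trans (setLIntegral_le_lintegral _ _) hF)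
  have hκ2 : ENNReal.ofReal (κ^2) ≠ 0 := by
    simp only [ne_eq, ENNReal.ofReal_eq_zero, not_le]
    nlinarith [hκ.1]
  have h2 : F s ≤ ENNReal.ofReal Kr / ENNReal.ofReal (κ^2) :=
    (ENNReal.le_div_iff_mul_le (Or.inl hκ2) (Or.inl ENNReal.ofReal_ne_top)).2
      (by rwa [mul_comm] at h1)
  have hne : ENNReal.ofReal Kr / ENNReal.ofReal (κ^2) ≠ ⊤ := by
    simp [ENNReal.div_eq_top, hκ2]
  refine ⟨ne_top_of_le_ne_top hne h2, ?_⟩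
  calc (F s).toReal ≤ (ENNReal.ofReal Kr / ENNReal.ofReal (κ^2)).toReal :=
        ENNReal.toReal_mono hne h2
    _ = Kr / κ^2 := by
        rw [ENNReal.toReal_div, ENNReal.toReal_ofReal hKr,
          ENNReal.toReal_ofReal (by nlinarith [hκ.1])]

lemma Gelem_le {Θ : Set (Eu d × Matrix (Fin d) (Fin d) ℝ × Measure (Eu d))} {K : ℝ≥0}
    (hK : ∀ x ∈ Θ, (∫⁻ z, ENNReal.ofReal (min ‖z‖ (‖z‖ ^ 2)) ∂x.2.2)
      + ENNReal.ofReal ‖x.1‖ + ∑ i, ∑ j, ENNReal.ofReal |x.2.1 i j| ≤ K)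
    {κ : ℝ} (hκ : κ ∈ Set.Ioo (0:ℝ) 1) (p : Eu d) (q : Matrix (Fin d) (Fin d) ℝ)
    {f g : Eu d → ℝ} (hfm : Measurable f) {Cf : ℝ} (hf : ∀ z, |f z| ≤ Cf)
    (hg : ContDiff ℝ 2 g) :
    ∃ M : ℝ, ∀ x ∈ Θ, ((∑ i, p i * x.1 i) + (1/2) * (q * x.2.1).trace
      + (∫ z in {z : Eu d | κ < ‖z‖}, (f z - f 0 - fderiv ℝ g 0 (trunc z)) ∂x.2.2)
      + (∫ z in {z : Eu d | ‖z‖ ≤ κ}, (g z - g 0 - fderiv ℝ g 0 (trunc z)) ∂x.2.2)) ≤ M := by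
  have hgc : Continuous (fderiv ℝ (fderiv ℝ g)) := by
    have h1 : ContDiff ℝ 1 (fderiv ℝ g) := hg.fderiv_right (by norm_num)
    exact (h1.fderiv_right (m := 0) (by norm_num)).continuous
  obtain ⟨Mg, hMg⟩ := (isCompact_closedBall (0 : Eu d) 1).exists_bound_of_continuousOn
    (f := fderiv ℝ (fderiv ℝ g)) hgc.continuousOn
  set Mg' := max Mg 0 with hMg'
  have hMg'0 : 0 ≤ Mg' := le_max_right _ _
  have hCf0 : 0 ≤ Cf := (abs_nonneg _).trans (hf 0)
  set L := fderiv ℝ g 0 with hL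
  refine ⟨‖p‖ * K + (1/2) * ((∑ i, ∑ j, |q i j|) * K)
    + (2*Cf + ‖L‖) * ((K:ℝ) / κ^2) + Mg' * K, ?_⟩
  intro x hx
  obtain ⟨hb, hc, hmK⟩ := triplet_bounds hK hx
  have t1 : (∑ i, p i * x.1 i) ≤ ‖p‖ * K := (le_abs_self _).trans (inner_sum_bound p x.1 hb)
  have t2 : (1/2) * (q * x.2.1).trace ≤ (1/2) * ((∑ i, ∑ j, |q i j|) * K) := by
    have := (le_abs_self _).trans (trace_bound q x.2.1 hc)
    linarith
  obtain ⟨hfin, hmass⟩ := Fmass_ball_compl (K.coe_nonneg) hmK hκ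
  -- jump part
  have hmeas3 : AEStronglyMeasurable (fun z => f z - f 0 - L (trunc z))
      (x.2.2.restrict {z : Eu d | κ < ‖z‖}) :=
    (((hfm.sub measurable_const).sub
      ((L.continuous.measurable).comp measurable_trunc)).stronglyMeasurable).aestronglyMeasurable
  have hb3 : ∀ z ∈ {z : Eu d | κ < ‖z‖}, |f z - f 0 - L (trunc z)| ≤ 2*Cf + ‖L‖ := by
    intro z _
    have h2 : |L (trunc z)| ≤ ‖L‖ := by
      calc |L (trunc z)| ≤ ‖L‖ * ‖trunc z‖ := L.le_opNorm _
        _ ≤ ‖L‖ := by nlinarith [norm_trunc_le z, norm_nonneg (trunc z), norm_nonneg L]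
    obtain ⟨ha1, ha2⟩ := abs_le.1 (hf z)
    obtain ⟨hb1, hb2⟩ := abs_le.1 (hf 0)
    obtain ⟨hc1, hc2⟩ := abs_le.1 h2
    exact abs_le.2 ⟨by linarith, by linarith⟩
  obtain ⟨hint3, hbd3⟩ := integrable_and_bound_const hfin (by positivity) hmeas3 hb3
  have t3 : (∫ z in {z : Eu d | κ < ‖z‖}, (f z - f 0 - L (trunc z)) ∂x.2.2)
      ≤ (2*Cf + ‖L‖) * ((K:ℝ) / κ^2) := by
    refine (le_abs_self _).trans (hbd3.trans ?_)
    exact mul_le_mul_of_nonneg_left hmass (by positivity)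
  -- small-jump part
  have hF2 : ∫⁻ z in {z : Eu d | ‖z‖ ≤ κ}, ENNReal.ofReal (mfun z) ∂x.2.2
      ≤ ENNReal.ofReal (K : ℝ) := le_trans (setLIntegral_le_lintegral _ _) hmK
  have hmeas4 : AEStronglyMeasurable (fun z => g z - g 0 - L (trunc z))
      (x.2.2.restrict {z : Eu d | ‖z‖ ≤ κ}) :=
    (((hg.continuous.measurable.sub measurable_const).sub
      ((L.continuous.measurable).comp measurable_trunc)).stronglyMeasurable).aestronglyMeasurable
  have hb4 : ∀ z ∈ {z : Eu d | ‖z‖ ≤ κ}, |g z - g 0 - L (trunc z)| ≤ Mg' * mfun z := by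
    intro z hz
    simp only [Set.mem_setOf_eq] at hz
    have hz1 : ‖z‖ ≤ 1 := hz.trans hκ.2.le
    rw [trunc_eq_self hz1, mfun_eq_sq hz1]
    exact taylor_quad hg (fun y hy => (hMg y hy).trans (le_max_left _ _)) hz1
  obtain ⟨hint4, hbd4⟩ := integrable_and_bound K.coe_nonneg
    (measurableSet_le measurable_norm measurable_const) hF2 hMg'0 hmeas4 hb4
  have t4 : (∫ z in {z : Eu d | ‖z‖ ≤ κ}, (g z - g 0 - L (trunc z)) ∂x.2.2)
      ≤ Mg' * K := (le_abs_self _).trans hbd4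
  linarith

end AuxLemmas3
section AuxLemmas4
variable {d : ℕ}

lemma integrand_const_bound {f : Eu d → ℝ} {Cf : ℝ} (hf : ∀ z, |f z| ≤ Cf)
    (L : Eu d →L[ℝ] ℝ) (z : Eu d) : |f z - f 0 - L (trunc z)| ≤ 2*Cf + ‖L‖ := by
  have h2 : |L (trunc z)| ≤ ‖L‖ := by
    calc |L (trunc z)| ≤ ‖L‖ * ‖trunc z‖ := L.le_opNorm _
      _ ≤ ‖L‖ := by nlinarith [norm_trunc_le z, norm_nonneg (trunc z), norm_nonneg L]
  obtain ⟨ha1, ha2⟩ := abs_le.1 (hf z)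
  obtain ⟨hb1, hb2⟩ := abs_le.1 (hf 0)
  obtain ⟨hc1, hc2⟩ := abs_le.1 h2
  exact abs_le.2 ⟨by linarith, by linarith⟩

lemma gp_integrableOn {g : Eu d → ℝ} (hg : ContDiff ℝ 2 g) {F : Measure (Eu d)} {Kr : ℝ}
    (hKr : 0 ≤ Kr)
    (hmK : ∫⁻ z, ENNReal.ofReal (mfun z) ∂F ≤ ENNReal.ofReal Kr)
    {κ : ℝ} (hκ : κ ∈ Set.Ioo (0:ℝ) 1) :
    IntegrableOn (fun z => g z - g 0 - fderiv ℝ g 0 (trunc z)) {z : Eu d | ‖z‖ ≤ κ} F := by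
  have hgc : Continuous (fderiv ℝ (fderiv ℝ g)) := by
    have h1 : ContDiff ℝ 1 (fderiv ℝ g) := hg.fderiv_right (by norm_num)
    exact (h1.fderiv_right (m := 0) (by norm_num)).continuous
  obtain ⟨Mg, hMg⟩ := (isCompact_closedBall (0 : Eu d) 1).exists_bound_of_continuousOn
    (f := fderiv ℝ (fderiv ℝ g)) hgc.continuousOn
  set Mg' := max Mg 0 with hMg'
  set L := fderiv ℝ g 0 with hL
  have hF2 : ∫⁻ z in {z : Eu d | ‖z‖ ≤ κ}, ENNReal.ofReal (mfun z) ∂F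
      ≤ ENNReal.ofReal Kr := le_trans (setLIntegral_le_lintegral _ _) hmK
  have hmeas : AEStronglyMeasurable (fun z => g z - g 0 - L (trunc z))
      (F.restrict {z : Eu d | ‖z‖ ≤ κ}) :=
    (((hg.continuous.measurable.sub measurable_const).sub
      ((L.continuous.measurable).comp measurable_trunc)).stronglyMeasurable).aestronglyMeasurable
  have hb4 : ∀ z ∈ {z : Eu d | ‖z‖ ≤ κ}, |g z - g 0 - L (trunc z)| ≤ Mg' * mfun z := by
    intro z hz
    simp only [Set.mem_setOf_eq] at hz
    have hz1 : ‖z‖ ≤ 1 := hz.trans hκ.2.le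
    rw [trunc_eq_self hz1, mfun_eq_sq hz1]
    exact taylor_quad hg (fun y hy => (hMg y hy).trans (le_max_left _ _)) hz1
  exact (integrable_and_bound hKr
    (measurableSet_le measurable_norm measurable_const) hF2 (le_max_right _ _) hmeas hb4).1

end AuxLemmas4
/-- **Statement 13** (Condition (C8) for `G^κ`): a uniform Lipschitz-type estimate for the
approximating nonlinearities `G^κ`, with a constant depending only on `𝒦`. -/
theorem Gk_condition_C8 {d : ℕ}
    (Θ : Set (Eu d × Matrix (Fin d) (Fin d) ℝ × Measure (Eu d)))
    (hne : Θ.Nonempty) (hmeas : MeasurableSet Θ) (htrip : IsLevyTripletSet Θ)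
    (hK : HasUniformBound Θ) :
    ∃ C > 0, ∀ κ ∈ Set.Ioo (0 : ℝ) 1, ∀ t ∈ Set.Ioi (0 : ℝ),
      ∀ (p₁ p₂ : Eu d) (q₁ q₂ : Matrix (Fin d) (Fin d) ℝ),
        q₁.IsSymm → q₂.IsSymm →
      ∀ f : ℝ → Eu d → ℝ, IsBoundedSC f →
      ∀ g : ℝ → Eu d → ℝ, IsC12 g →
      ∀ ψ : Eu d → ℝ, IsC2b ψ →
      ∀ C₁ C₂ : ℝ, (∀ y, ‖fderiv ℝ ψ y‖ ≤ C₁) → (∀ y, ‖fderiv ℝ (fderiv ℝ ψ) y‖ ≤ C₂) →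
        |Gkop Θ κ p₁ q₁ (fun z => f t z + ψ z) (fun z => g t z + ψ z)
            - Gkop Θ κ p₂ q₂ (f t) (g t)|
          ≤ C * (‖p₁ - p₂‖ + (∑ i, ∑ j, |(q₁ - q₂) i j|) + C₁ + C₂) := by
  obtain ⟨K, hK⟩ := hK
  refine ⟨2 * (K:ℝ) + 1, by positivity, ?_⟩
  intro κ hκ t ht p₁ p₂ q₁ q₂ _ _ f hf g hg ψ hψ C₁ C₂ hC₁ hC₂
  have hC₁0 : 0 ≤ C₁ := (norm_nonneg _).trans (hC₁ 0)
  have hC₂0 : 0 ≤ C₂ := (norm_nonneg (fderiv ℝ (fderiv ℝ ψ) 0)).trans (hC₂ 0)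
  have hψ2 : ContDiff ℝ 2 ψ := hψ.1
  obtain ⟨Cψ, hCψ'⟩ := hψ.2
  have hCψ : ∀ y, |ψ y| ≤ Cψ := fun y => (hCψ' y).1
  have hfm : Measurable (f t) := hf.slice_measurable ht
  obtain ⟨Cf, hCf'⟩ := hf.2
  have hCf : ∀ z, |f t z| ≤ Cf := fun z => hCf' t ht z
  have hCf0 : 0 ≤ Cf := (abs_nonneg _).trans (hCf 0)
  have hg2 : ContDiff ℝ 2 (g t) := hg.2.2.1 t ht
  set s₁ : Set (Eu d) := {z : Eu d | κ < ‖z‖} with hs₁def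
  set s₂ : Set (Eu d) := {z : Eu d | ‖z‖ ≤ κ} with hs₂def
  have hs₁m : MeasurableSet s₁ := measurableSet_lt measurable_const measurable_norm
  have hs₂m : MeasurableSet s₂ := measurableSet_le measurable_norm measurable_const
  set e₁ : Eu d × Matrix (Fin d) (Fin d) ℝ × Measure (Eu d) → ℝ := fun x =>
    (∑ i, p₁ i * x.1 i) + (1 / 2) * (q₁ * x.2.1).trace
      + (∫ z in s₁, ((f t z + ψ z) - (f t 0 + ψ 0)
          - fderiv ℝ (fun z => g t z + ψ z) 0 (trunc z)) ∂x.2.2)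
      + (∫ z in s₂, ((g t z + ψ z) - (g t 0 + ψ 0)
          - fderiv ℝ (fun z => g t z + ψ z) 0 (trunc z)) ∂x.2.2) with he₁
  set e₂ : Eu d × Matrix (Fin d) (Fin d) ℝ × Measure (Eu d) → ℝ := fun x =>
    (∑ i, p₂ i * x.1 i) + (1 / 2) * (q₂ * x.2.1).trace
      + (∫ z in s₁, (f t z - f t 0 - fderiv ℝ (g t) 0 (trunc z)) ∂x.2.2)
      + (∫ z in s₂, (g t z - g t 0 - fderiv ℝ (g t) 0 (trunc z)) ∂x.2.2) with he₂
  have hGk1 : Gkop Θ κ p₁ q₁ (fun z => f t z + ψ z) (fun z => g t z + ψ z)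
      = sSup {r : ℝ | ∃ x ∈ Θ, r = e₁ x} := by rw [he₁]; rfl
  have hGk2 : Gkop Θ κ p₂ q₂ (f t) (g t)
      = sSup {r : ℝ | ∃ x ∈ Θ, r = e₂ x} := by rw [he₂]; rfl
  obtain ⟨x₀, hx₀⟩ := hne
  have hS₁ne : {r : ℝ | ∃ x ∈ Θ, r = e₁ x}.Nonempty := ⟨e₁ x₀, x₀, hx₀, rfl⟩
  have hS₂ne : {r : ℝ | ∃ x ∈ Θ, r = e₂ x}.Nonempty := ⟨e₂ x₀, x₀, hx₀, rfl⟩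
  obtain ⟨M₁, hM₁⟩ := Gelem_le hK hκ p₁ q₁ (f := fun z => f t z + ψ z)
    (hfm.add hψ2.continuous.measurable) (Cf := Cf + Cψ)
    (fun z => (abs_add_le _ _).trans (add_le_add (hCf z) (hCψ z)))
    (hg2.add hψ2)
  obtain ⟨M₂, hM₂⟩ := Gelem_le hK hκ p₂ q₂ hfm hCf hg2
  have hS₁bdd : BddAbove {r : ℝ | ∃ x ∈ Θ, r = e₁ x} := by
    refine ⟨M₁, ?_⟩
    rintro r ⟨x, hx, rfl⟩
    exact hM₁ x hx
  have hS₂bdd : BddAbove {r : ℝ | ∃ x ∈ Θ, r = e₂ x} := by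
    refine ⟨M₂, ?_⟩
    rintro r ⟨x, hx, rfl⟩
    exact hM₂ x hx
  -- pairwise estimate
  have key : ∀ x ∈ Θ, |e₁ x - e₂ x|
      ≤ (2 * (K:ℝ) + 1) * (‖p₁ - p₂‖ + (∑ i, ∑ j, |(q₁ - q₂) i j|) + C₁ + C₂) := by
    intro x hx
    obtain ⟨hbK, hcK, hmK⟩ := triplet_bounds hK hx
    set L := fderiv ℝ (g t) 0 with hLdef
    set Lψ := fderiv ℝ ψ 0 with hLψdef
    have hLadd : fderiv ℝ (fun z => g t z + ψ z) 0 = L + Lψ :=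
      fderiv_add ((hg2.differentiable (by norm_num)) 0) ((hψ2.differentiable (by norm_num)) 0)
    set w : Eu d → ℝ := fun z => ψ z - ψ 0 - Lψ (trunc z) with hwdef
    have hwb : ∀ z, |w z| ≤ (C₁ + C₂) * mfun z := fun z => psi_integrand_bound hψ2 hC₁ hC₂ z
    have hwmeas : Measurable w := (hψ2.continuous.measurable.sub measurable_const).sub
      (Lψ.continuous.measurable.comp measurable_trunc)
    have hF1 : ∫⁻ z in s₁, ENNReal.ofReal (mfun z) ∂x.2.2 ≤ ENNReal.ofReal (K:ℝ) :=
      le_trans (setLIntegral_le_lintegral _ _) hmK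
    have hF2 : ∫⁻ z in s₂, ENNReal.ofReal (mfun z) ∂x.2.2 ≤ ENNReal.ofReal (K:ℝ) :=
      le_trans (setLIntegral_le_lintegral _ _) hmK
    obtain ⟨hw1int, hw1bd⟩ := integrable_and_bound K.coe_nonneg hs₁m hF1 (by positivity)
      hwmeas.stronglyMeasurable.aestronglyMeasurable (fun z _ => hwb z)
    obtain ⟨hw2int, hw2bd⟩ := integrable_and_bound K.coe_nonneg hs₂m hF2 (by positivity)
      hwmeas.stronglyMeasurable.aestronglyMeasurable (fun z _ => hwb z)
    obtain ⟨hfin1, _⟩ := Fmass_ball_compl K.coe_nonneg hmK hκ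
    set fp : Eu d → ℝ := fun z => f t z - f t 0 - L (trunc z) with hfpdef
    have hfpmeas : Measurable fp := (hfm.sub measurable_const).sub
      (L.continuous.measurable.comp measurable_trunc)
    obtain ⟨hfpint, -⟩ := integrable_and_bound_const hfin1 (M := 2*Cf + ‖L‖)
      (by positivity) hfpmeas.stronglyMeasurable.aestronglyMeasurable
      (fun z _ => integrand_const_bound hCf L z)
    set gp : Eu d → ℝ := fun z => g t z - g t 0 - L (trunc z) with hgpdef
    have hgpint : IntegrableOn gp s₂ x.2.2 := gp_integrableOn hg2 K.coe_nonneg hmK hκ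
    have hsplit1 : (∫ z in s₁, ((f t z + ψ z) - (f t 0 + ψ 0)
          - fderiv ℝ (fun z => g t z + ψ z) 0 (trunc z)) ∂x.2.2)
        = (∫ z in s₁, fp z ∂x.2.2) + (∫ z in s₁, w z ∂x.2.2) := by
      have heq : (fun z => (f t z + ψ z) - (f t 0 + ψ 0)
          - fderiv ℝ (fun z => g t z + ψ z) 0 (trunc z)) = fun z => fp z + w z := by
        funext z
        rw [hLadd]
        simp only [hfpdef, hwdef, ContinuousLinearMap.add_apply]
        ring
      rw [heq, integral_add hfpint hw1int]
    have hsplit2 : (∫ z in s₂, ((g t z + ψ z) - (g t 0 + ψ 0)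
          - fderiv ℝ (fun z => g t z + ψ z) 0 (trunc z)) ∂x.2.2)
        = (∫ z in s₂, gp z ∂x.2.2) + (∫ z in s₂, w z ∂x.2.2) := by
      have heq : (fun z => (g t z + ψ z) - (g t 0 + ψ 0)
          - fderiv ℝ (fun z => g t z + ψ z) 0 (trunc z)) = fun z => gp z + w z := by
        funext z
        rw [hLadd]
        simp only [hgpdef, hwdef, ContinuousLinearMap.add_apply]
        ring
      rw [heq, integral_add hgpint hw2int]
    have hp : (∑ i, (p₁ - p₂) i * x.1 i)
        = (∑ i, p₁ i * x.1 i) - (∑ i, p₂ i * x.1 i) := by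
      rw [← Finset.sum_sub_distrib]
      refine Finset.sum_congr rfl fun i _ => ?_
      show (p₁ i - p₂ i) * x.1 i = _
      ring
    have hq : ((q₁ - q₂) * x.2.1).trace = (q₁ * x.2.1).trace - (q₂ * x.2.1).trace := by
      rw [Matrix.sub_mul, Matrix.trace_sub]
    have hdiff : e₁ x - e₂ x = (∑ i, (p₁ - p₂) i * x.1 i)
        + (1/2) * ((q₁ - q₂) * x.2.1).trace
        + (∫ z in s₁, w z ∂x.2.2) + (∫ z in s₂, w z ∂x.2.2) := by
      simp only [he₁, he₂]
      rw [hsplit1, hsplit2, hp, hq]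
      ring
    have hA : |∑ i, (p₁ - p₂) i * x.1 i| ≤ ‖p₁ - p₂‖ * K := inner_sum_bound _ _ hbK
    have hB : |((q₁ - q₂) * x.2.1).trace| ≤ (∑ i, ∑ j, |(q₁ - q₂) i j|) * K :=
      trace_bound _ _ hcK
    rw [hdiff]
    have habs : |(∑ i, (p₁ - p₂) i * x.1 i) + (1/2) * ((q₁ - q₂) * x.2.1).trace
        + (∫ z in s₁, w z ∂x.2.2) + (∫ z in s₂, w z ∂x.2.2)|
        ≤ |∑ i, (p₁ - p₂) i * x.1 i| + (1/2) * |((q₁ - q₂) * x.2.1).trace|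
          + |∫ z in s₁, w z ∂x.2.2| + |∫ z in s₂, w z ∂x.2.2| := by
      have h1 := abs_add_le ((∑ i, (p₁ - p₂) i * x.1 i) + (1/2) * ((q₁ - q₂) * x.2.1).trace
        + (∫ z in s₁, w z ∂x.2.2)) (∫ z in s₂, w z ∂x.2.2)
      have h2 := abs_add_le ((∑ i, (p₁ - p₂) i * x.1 i)
        + (1/2) * ((q₁ - q₂) * x.2.1).trace) (∫ z in s₁, w z ∂x.2.2)
      have h3 := abs_add_le (∑ i, (p₁ - p₂) i * x.1 i) ((1/2) * ((q₁ - q₂) * x.2.1).trace)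
      have h4 : |(1/2) * ((q₁ - q₂) * x.2.1).trace| = (1/2) * |((q₁ - q₂) * x.2.1).trace| := by
        rw [abs_mul]; norm_num
      linarith
    have hsum0 : 0 ≤ ∑ i, ∑ j, |(q₁ - q₂) i j| :=
      Finset.sum_nonneg fun i _ => Finset.sum_nonneg fun j _ => abs_nonneg _
    have hK0 : (0:ℝ) ≤ K := K.coe_nonneg
    have hp0 : (0:ℝ) ≤ ‖p₁ - p₂‖ := norm_nonneg _
    have hKa := mul_nonneg hK0 hp0
    have hKb := mul_nonneg hK0 hsum0
    have hKc := mul_nonneg hK0 hC₁0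
    have hKd := mul_nonneg hK0 hC₂0
    linarith [habs, hA, hB, hw1bd, hw2bd]
  rw [hGk1, hGk2]
  refine abs_csSup_sub_csSup_le hS₁ne hS₂ne hS₁bdd hS₂bdd ?_ ?_
  · rintro r ⟨x, hx, rfl⟩
    exact ⟨e₂ x, ⟨x, hx, rfl⟩, key x hx⟩
  · rintro s ⟨x, hx, rfl⟩
    refine ⟨e₁ x, ⟨x, hx, rfl⟩, ?_⟩
    rw [abs_sub_comm]
    exact key x hx
end
end
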